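/- For k ∈ ℕ let S_k = {0, 1} ∪ {2^(2^i) : 1 ≤ i ≤ k}, a set of k+2 natural numbers. There exist a real constant c > 0 and K ∈ ℕ such that for all k ≥ K one has z_{S_k} ≥ c·√k. -/

import Mathlib

open Real Finset

/-- `g_S(t) = ∑_{e ∈ S} t^(2e)`. -/
noncomputable def gS (S : Finset ℕ) (t : ℝ) : ℝ := ∑ e ∈ S, t ^ (2 * e)

/-- `h_S(t) = ∑_{e ∈ S} e² t^(2e-2)` (the term for `e = 0` being `0`). -/
noncomputable def hS (S : Finset ℕ) (t : ℝ) : ℝ := ∑ e ∈ S, (e : ℝ) ^ 2 * t ^ (2 * e - 2)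

/-- `q_S(t) = ∑_{e ∈ S} e t^(2e-1)` (the term for `e = 0` being `0`). -/
noncomputable def qS (S : Finset ℕ) (t : ℝ) : ℝ := ∑ e ∈ S, (e : ℝ) * t ^ (2 * e - 1)

/-- `E_S(t) = g_S(t) h_S(t) - q_S(t)²`. -/
noncomputable def ES (S : Finset ℕ) (t : ℝ) : ℝ := gS S t * hS S t - qS S t ^ 2

/-- The expected number of real zeros in `(0,1)`, given by the Edelman–Kostlan integral. -/
noncomputable def zS (S : Finset ℕ) : ℝ :=
  (1 / Real.pi) * ∫ t in (0 : ℝ)..1, Real.sqrt (ES S t) / gS S t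

namespace St1

def f (i : ℕ) : ℕ := 2 ^ (2 ^ i)

lemma two_le_f (i : ℕ) : 2 ≤ f i := by
  have : 1 ≤ 2 ^ i := Nat.one_le_two_pow
  calc 2 = 2 ^ 1 := rfl
  _ ≤ 2 ^ (2^i) := Nat.pow_le_pow_right (by norm_num) this

lemma f_pos (i : ℕ) : 0 < f i := by have := two_le_f i; omega

lemma f_sq (i : ℕ) : f (i+1) = f i * f i := by
  unfold f; rw [← pow_add]; congr 1; rw [pow_succ]; ring

lemma two_f_le (i : ℕ) : 2 * f i ≤ f (i+1) := by
  rw [f_sq]; exact Nat.mul_le_mul_right _ (two_le_f i)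

lemma f_mono : Monotone f := by
  apply monotone_nat_of_le_succ
  intro n; have := two_f_le n; omega

-- key numeric: (j - i + 1) * f i ≤ f j for i < j
lemma mul_f_le (i j : ℕ) (h : i < j) : (j - i + 1) * f i ≤ f j := by
  have h1 : 2 ^ i + (2^j - 2^i) = 2^j := by
    have : (2:ℕ)^i ≤ 2^j := Nat.pow_le_pow_right (by norm_num) h.le
    omega
  have h2 : f j = f i * 2 ^ (2^j - 2^i) := by
    unfold f; rw [← pow_add, h1]
  have h3 : j - i + 1 ≤ 2 ^ (2^j - 2^i) := by
    have hji : j - i ≤ 2^j - 2^i := by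
      have : j - i ≤ 2^(j-i) - 1 := by
        have := Nat.lt_two_pow_self (n := j - i); omega
      have h4 : 2^(j-i) - 1 ≤ 2^j - 2^i := by
        have h5 : 2^j = 2^i * 2^(j-i) := by rw [← pow_add]; congr 1; omega
        have h6 : 1 ≤ 2^i := Nat.one_le_two_pow
        have h7 : 1 ≤ 2^(j-i) := Nat.one_le_two_pow
        have h8 : 2^i + 2^(j-i) ≤ 2^i * 2^(j-i) + 1 := by nlinarith
        omega
      omega
    calc j - i + 1 ≤ 2^(j-i) := Nat.lt_two_pow_self (n := j-i)
    _ ≤ 2^(2^j - 2^i) := Nat.pow_le_pow_right (by norm_num) hji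
  calc (j - i + 1) * f i ≤ 2^(2^j-2^i) * f i := Nat.mul_le_mul_right _ h3
  _ = f j := by rw [h2, Nat.mul_comm]

noncomputable def a (i : ℕ) : ℝ := ((1:ℝ)/2) ^ ((f i : ℝ)⁻¹)
noncomputable def b (i : ℕ) : ℝ := ((1:ℝ)/2) ^ ((2 * (f i : ℝ))⁻¹)

lemma fR_pos (i : ℕ) : (0:ℝ) < (f i : ℝ) := by exact_mod_cast f_pos i

lemma a_pos (i : ℕ) : 0 < a i := rpow_pos_of_pos (by norm_num) _
lemma b_pos (i : ℕ) : 0 < b i := rpow_pos_of_pos (by norm_num) _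
lemma a_lt_one (i : ℕ) : a i < 1 :=
  rpow_lt_one (by norm_num) (by norm_num) (by have := fR_pos i; positivity)
lemma b_lt_one (i : ℕ) : b i < 1 :=
  rpow_lt_one (by norm_num) (by norm_num) (by have := fR_pos i; positivity)

lemma a_lt_b (i : ℕ) : a i < b i := by
  apply rpow_lt_rpow_of_exponent_gt (by norm_num) (by norm_num)
  have := fR_pos i
  rw [inv_lt_inv₀ (by have := fR_pos i; linarith) (fR_pos i)]
  linarith

lemma b_le_a_succ (i : ℕ) : b i ≤ a (i+1) := by
  apply rpow_le_rpow_of_exponent_ge (by norm_num) (by norm_num)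
  have h := two_f_le i
  have h' : (2:ℝ) * f i ≤ f (i+1) := by exact_mod_cast h
  rw [inv_le_inv₀ (fR_pos (i+1)) (by have := fR_pos i; linarith)]
  exact h'

lemma a_pow (i : ℕ) : a i ^ (f i) = 1/2 := by
  rw [a, ← rpow_natCast (_ ^ _) (f i), ← rpow_mul (by norm_num)]
  rw [inv_mul_cancel₀ (fR_pos i).ne']
  simp

lemma b_pow (i : ℕ) : b i ^ (f i) = ((1:ℝ)/2) ^ ((2:ℝ)⁻¹) := by
  rw [b, ← rpow_natCast (_ ^ _) (f i), ← rpow_mul (by norm_num)]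
  congr 1
  rw [mul_inv, mul_assoc, inv_mul_cancel₀ (fR_pos i).ne', mul_one]

lemma b_pow_ge : ((1:ℝ)/2) ^ ((2:ℝ)⁻¹) ≥ 7/10 := by
  have h : ((1:ℝ)/2) ^ ((2:ℝ)⁻¹) = Real.sqrt (1/2) := by
    rw [Real.sqrt_eq_rpow]; norm_num
  rw [h]
  rw [show (7:ℝ)/10 = Real.sqrt ((7/10)^2) by rw [Real.sqrt_sq (by norm_num)]]
  apply Real.sqrt_le_sqrt; norm_num




def Sk (k : ℕ) : Finset ℕ := {0, 1} ∪ (Finset.Icc 1 k).image f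

lemma zero_mem (k : ℕ) : 0 ∈ Sk k := by simp [Sk]
lemma one_mem (k : ℕ) : 1 ∈ Sk k := by simp [Sk]
lemma f_mem {k i : ℕ} (h : i ∈ Icc 1 k) : f i ∈ Sk k := by
  simp only [Sk, mem_union, mem_image]; right; exact ⟨i, h, rfl⟩

lemma pow_two_mul_nonneg (t : ℝ) (e : ℕ) : 0 ≤ t ^ (2 * e) := by
  rw [pow_mul]; exact pow_nonneg (sq_nonneg t) e

lemma gS_pos (S : Finset ℕ) (h0 : 0 ∈ S) (t : ℝ) : 1 ≤ gS S t := by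
  have := Finset.single_le_sum (f := fun e => t ^ (2 * e))
    (fun e _ => pow_two_mul_nonneg t e) h0
  simpa [gS] using this

lemma continuous_gS (S : Finset ℕ) : Continuous (gS S) := by
  apply continuous_finset_sum; intro e _; exact continuous_pow _
lemma continuous_ES (S : Finset ℕ) : Continuous (ES S) := by
  apply Continuous.sub
  · exact (continuous_gS S).mul (continuous_finset_sum _ fun e _ =>
      (continuous_const.mul (continuous_pow _)))
  · exact ((continuous_finset_sum _ fun e _ => (continuous_const.mul (continuous_pow _))).pow 2)

lemma continuous_phi (S : Finset ℕ) (h0 : 0 ∈ S) :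
    Continuous (fun t => Real.sqrt (ES S t) / gS S t) := by
  apply Continuous.div (Real.continuous_sqrt.comp (continuous_ES S)) (continuous_gS S)
  intro t; have := gS_pos S h0 t; linarith

lemma phi_nonneg (S : Finset ℕ) (h0 : 0 ∈ S) (t : ℝ) :
    0 ≤ Real.sqrt (ES S t) / gS S t := by
  apply div_nonneg (Real.sqrt_nonneg _); have := gS_pos S h0 t; linarith

-- algebraic identity
lemma t_sq_mul_hS (S : Finset ℕ) (t : ℝ) :
    t ^ 2 * hS S t = ∑ e ∈ S, (e : ℝ) ^ 2 * t ^ (2 * e) := by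
  rw [hS, Finset.mul_sum]
  apply Finset.sum_congr rfl
  intro e _
  rcases Nat.eq_zero_or_pos e with he | he
  · subst he; simp
  · have h : 2 * e - 2 + 2 = 2 * e := by omega
    rw [mul_comm (t^2), mul_assoc, ← pow_add, h]

lemma t_mul_qS (S : Finset ℕ) (t : ℝ) :
    t * qS S t = ∑ e ∈ S, (e : ℝ) * t ^ (2 * e) := by
  rw [qS, Finset.mul_sum]
  apply Finset.sum_congr rfl
  intro e _
  rcases Nat.eq_zero_or_pos e with he | he
  · subst he; simp
  · have h : 2 * e - 1 + 1 = 2 * e := by omega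
    rw [mul_comm t, mul_assoc, ← pow_succ, h]

noncomputable def DD (S : Finset ℕ) (t : ℝ) : ℝ :=
  ∑ e ∈ S, ∑ f ∈ S, ((f : ℝ) - (e : ℝ)) ^ 2 * (t ^ (2 * e) * t ^ (2 * f))

lemma DD_nonneg_terms (t : ℝ) (e fe : ℕ) :
    0 ≤ ((fe : ℝ) - (e : ℝ)) ^ 2 * (t ^ (2 * e) * t ^ (2 * fe)) :=
  mul_nonneg (sq_nonneg _) (mul_nonneg (pow_two_mul_nonneg t e) (pow_two_mul_nonneg t fe))

lemma DD_eq (S : Finset ℕ) (t : ℝ) : DD S t = 2 * t ^ 2 * ES S t := by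
  have h1 := t_sq_mul_hS S t
  have h2 := t_mul_qS S t
  set H := ∑ e ∈ S, (e : ℝ) ^ 2 * t ^ (2 * e) with hH
  set Q := ∑ e ∈ S, (e : ℝ) * t ^ (2 * e) with hQ
  have inner : ∀ e : ℕ,
      ∑ fe ∈ S, ((fe : ℝ) - (e : ℝ)) ^ 2 * (t ^ (2 * e) * t ^ (2 * fe))
        = t ^ (2 * e) * H - ((e : ℝ) * t ^ (2 * e)) * (2 * Q)
          + ((e : ℝ) ^ 2 * t ^ (2 * e)) * gS S t := by
    intro e
    rw [hH, hQ, gS]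
    simp only [Finset.mul_sum]
    rw [← Finset.sum_sub_distrib, ← Finset.sum_add_distrib]
    apply Finset.sum_congr rfl
    intro fe _
    ring
  have hDD : DD S t = gS S t * H - Q * (2 * Q) + H * gS S t := by
    rw [DD]
    calc (∑ e ∈ S, ∑ fe ∈ S, ((fe : ℝ) - (e : ℝ)) ^ 2 * (t ^ (2 * e) * t ^ (2 * fe)))
        = ∑ e ∈ S, (t ^ (2 * e) * H - ((e : ℝ) * t ^ (2 * e)) * (2 * Q)
            + ((e : ℝ) ^ 2 * t ^ (2 * e)) * gS S t) :=
          Finset.sum_congr rfl fun e _ => inner e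
      _ = (∑ e ∈ S, t ^ (2 * e)) * H - Q * (2 * Q) + H * gS S t := by
          rw [Finset.sum_add_distrib, Finset.sum_sub_distrib, ← Finset.sum_mul,
            ← Finset.sum_mul, ← Finset.sum_mul, ← hQ, ← hH]
      _ = gS S t * H - Q * (2 * Q) + H * gS S t := by rw [← gS]
  rw [hDD, ES]
  have : 2 * t ^ 2 * (gS S t * hS S t - qS S t ^ 2)
      = 2 * (gS S t * (t ^ 2 * hS S t)) - 2 * (t * qS S t) ^ 2 := by ring
  rw [this, h1, h2]
  ring

lemma ES_ge (S : Finset ℕ) (t : ℝ) (ht : 0 < t) (F : ℕ) (hF : F ∈ S)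
    (A : Finset ℕ) (hA : A ⊆ S) :
    (∑ e ∈ A, ((F : ℝ) - (e : ℝ)) ^ 2 * t ^ (2 * e)) * t ^ (2 * F) / (2 * t ^ 2)
      ≤ ES S t := by
  have key : (∑ e ∈ A, ((F : ℝ) - (e : ℝ)) ^ 2 * t ^ (2 * e)) * t ^ (2 * F) ≤ DD S t := by
    rw [Finset.sum_mul]
    calc ∑ e ∈ A, ((F : ℝ) - (e : ℝ)) ^ 2 * t ^ (2 * e) * t ^ (2 * F)
        = ∑ e ∈ A, ((F : ℝ) - (e : ℝ)) ^ 2 * (t ^ (2 * e) * t ^ (2 * F)) := by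
          apply Finset.sum_congr rfl; intro e _; ring
      _ ≤ ∑ e ∈ S, ((F : ℝ) - (e : ℝ)) ^ 2 * (t ^ (2 * e) * t ^ (2 * F)) :=
          Finset.sum_le_sum_of_subset_of_nonneg hA fun e _ _ => DD_nonneg_terms t e F
      _ ≤ DD S t := by
          apply Finset.sum_le_sum
          intro e _
          exact Finset.single_le_sum
            (f := fun fe : ℕ => ((fe : ℝ) - (e : ℝ)) ^ 2 * (t ^ (2 * e) * t ^ (2 * fe)))
            (fun fe _ => DD_nonneg_terms t e fe) hF
  have hE : ES S t = DD S t / (2 * t ^ 2) := by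
    rw [DD_eq]; field_simp
  rw [hE]
  exact (div_le_div_iff_of_pos_right (by positivity)).mpr key



lemma f_strictMono : StrictMono f := by
  apply strictMono_nat_of_lt_succ
  intro n
  have h1 := two_f_le n
  have h2 := f_pos n
  omega

def Ai (i : ℕ) : Finset ℕ := {0, 1} ∪ (Finset.Icc 1 (i-1)).image f

lemma Ai_subset {k i : ℕ} (h : i - 1 ≤ k) : Ai i ⊆ Sk k := by
  unfold Ai Sk
  apply Finset.union_subset_union_right
  apply Finset.image_subset_image
  exact Finset.Icc_subset_Icc_right h

lemma not_mem_image_f (n : ℕ) (hn : n ≤ 1) (s : Finset ℕ) : n ∉ s.image f := by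
  simp only [Finset.mem_image, not_exists]
  intro j
  rintro ⟨_, hj⟩
  have := two_le_f j; omega

lemma Ai_card (i : ℕ) (hi : 1 ≤ i) : (Ai i).card = i + 1 := by
  unfold Ai
  rw [Finset.card_union_of_disjoint]
  · rw [Finset.card_image_of_injective _ f_strictMono.injective]
    rw [Nat.card_Icc]
    have : ({0, 1} : Finset ℕ).card = 2 := rfl
    omega
  · rw [Finset.disjoint_left]
    intro n hn
    have : n ≤ 1 := by
      simp only [Finset.mem_insert, Finset.mem_singleton] at hn
      omega
    exact not_mem_image_f n this _

lemma Ai_le {i : ℕ} (hi : 1 ≤ i) {e : ℕ} (he : e ∈ Ai i) : e ≤ f (i-1) := by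
  unfold Ai at he
  simp only [Finset.mem_union, Finset.mem_insert, Finset.mem_singleton,
    Finset.mem_image] at he
  rcases he with (h | h) | ⟨j, hj, rfl⟩
  · subst h; omega
  · subst h; have := two_le_f (i-1); omega
  · exact f_mono (Finset.mem_Icc.mp hj).2

lemma two_f_pred_le {i : ℕ} (hi : 1 ≤ i) : 2 * f (i-1) ≤ f i := by
  have := two_f_le (i-1)
  rwa [Nat.sub_add_cancel hi] at this

lemma a_pow_ge (i m : ℕ) (h : m ≤ f i) : (1/2 : ℝ) ≤ a i ^ m := by
  rw [a, ← rpow_natCast (_ ^ _) m, ← rpow_mul (by norm_num)]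
  nth_rewrite 1 [show ((1:ℝ)/2) = ((1:ℝ)/2) ^ (1:ℝ) by rw [rpow_one]]
  apply rpow_le_rpow_of_exponent_ge (by norm_num) (by norm_num)
  rw [inv_mul_le_iff₀ (fR_pos i), mul_one]
  exact_mod_cast h

lemma b_pow_le (i n m : ℕ) (h : m * f i ≤ n) : b i ^ (2 * n) ≤ ((1:ℝ)/2) ^ (m : ℕ) := by
  rw [b, ← rpow_natCast (_ ^ _) (2*n), ← rpow_mul (by norm_num), ← rpow_natCast ((1:ℝ)/2) m]
  apply rpow_le_rpow_of_exponent_ge (by norm_num) (by norm_num)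
  have hf := fR_pos i
  rw [show ((2:ℝ) * (f i:ℝ))⁻¹ * ((2*n : ℕ):ℝ) = (n:ℝ) / (f i:ℝ) by
    push_cast; field_simp]
  rw [le_div_iff₀ hf]
  exact_mod_cast h

lemma sqrtES_ge {k i : ℕ} (hi1 : 1 ≤ i) (hik : i ≤ k) {t : ℝ}
    (hta : a i ≤ t) (htb : t ≤ b i) :
    Real.sqrt ((i:ℝ)+1) * (f i : ℝ) * t ^ (f i - 1) / 4 ≤ Real.sqrt (ES (Sk k) t) := by
  have ht0 : 0 < t := lt_of_lt_of_le (a_pos i) hta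
  have hfi := f_pos i
  have hfm : i ∈ Finset.Icc 1 k := Finset.mem_Icc.mpr ⟨hi1, hik⟩
  -- lower bound each term of the sum over Ai
  have hterm : ∀ e ∈ Ai i,
      ((f i : ℝ)/2)^2 * (1/2) ≤ ((f i : ℝ) - (e : ℝ))^2 * t ^ (2 * e) := by
    intro e he
    have he1 : e ≤ f (i-1) := Ai_le hi1 he
    have h2f : 2 * f (i-1) ≤ f i := two_f_pred_le hi1
    have hfe : (f i : ℝ)/2 ≤ (f i : ℝ) - (e : ℝ) := by
      have : (e : ℝ) ≤ (f i : ℝ)/2 := by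
        have : 2 * e ≤ f i := by omega
        have := (by exact_mod_cast this : 2 * (e:ℝ) ≤ (f i : ℝ))
        linarith
      linarith
    have hfe0 : (0:ℝ) ≤ (f i : ℝ)/2 := by positivity
    have ht2e : (1/2 : ℝ) ≤ t ^ (2 * e) := by
      calc (1/2 : ℝ) ≤ a i ^ (2 * e) := a_pow_ge i (2*e) (by omega)
      _ ≤ t ^ (2 * e) := pow_le_pow_left₀ (a_pos i).le hta _
    have hsq : ((f i : ℝ)/2)^2 ≤ ((f i : ℝ) - (e : ℝ))^2 := by nlinarith
    exact mul_le_mul hsq ht2e (by norm_num) (sq_nonneg _)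
  have hsum : ((i:ℝ)+1) * (((f i : ℝ)/2)^2 * (1/2))
      ≤ ∑ e ∈ Ai i, ((f i : ℝ) - (e : ℝ))^2 * t ^ (2 * e) := by
    have := Finset.card_nsmul_le_sum (Ai i)
      (fun e => ((f i : ℝ) - (e : ℝ))^2 * t ^ (2 * e)) _ hterm
    rwa [Ai_card i hi1, nsmul_eq_mul, Nat.cast_add, Nat.cast_one] at this
  have hES := ES_ge (Sk k) t ht0 (f i) (f_mem hfm) (Ai i) (Ai_subset (by omega))
  have hpow : t ^ (2 * f i) = (t ^ (f i - 1))^2 * t^2 := by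
    rw [← pow_mul, ← pow_add]
    congr 1
    omega
  have hlow : ((i:ℝ)+1) * (f i : ℝ)^2 * (t ^ (f i - 1))^2 / 16 ≤ ES (Sk k) t := by
    calc ((i:ℝ)+1) * (f i : ℝ)^2 * (t ^ (f i - 1))^2 / 16
        = (((i:ℝ)+1) * (((f i : ℝ)/2)^2 * (1/2))) * t ^ (2 * f i) / (2 * t^2) := by
          rw [hpow]; field_simp; ring
      _ ≤ (∑ e ∈ Ai i, ((f i : ℝ) - (e : ℝ))^2 * t ^ (2 * e)) * t ^ (2 * f i) / (2 * t^2) := by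
          have hnum := mul_le_mul_of_nonneg_right hsum (pow_two_mul_nonneg t (f i))
          exact div_le_div₀ (le_trans (by positivity) hnum) hnum (by positivity) le_rfl
      _ ≤ ES (Sk k) t := hES
  have hR0 : 0 ≤ Real.sqrt ((i:ℝ)+1) * (f i : ℝ) * t ^ (f i - 1) / 4 := by
    have := pow_nonneg ht0.le (f i - 1)
    have := Real.sqrt_nonneg ((i:ℝ)+1)
    positivity
  have hRsq : (Real.sqrt ((i:ℝ)+1) * (f i : ℝ) * t ^ (f i - 1) / 4)^2
      = ((i:ℝ)+1) * (f i : ℝ)^2 * (t ^ (f i - 1))^2 / 16 := by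
    rw [div_pow, mul_pow, mul_pow, Real.sq_sqrt (by positivity)]
    norm_num
  calc Real.sqrt ((i:ℝ)+1) * (f i : ℝ) * t ^ (f i - 1) / 4
      = Real.sqrt ((Real.sqrt ((i:ℝ)+1) * (f i : ℝ) * t ^ (f i - 1) / 4)^2) :=
        (Real.sqrt_sq hR0).symm
    _ ≤ Real.sqrt (ES (Sk k) t) := Real.sqrt_le_sqrt (by rw [hRsq]; exact hlow)

lemma geom_tail (N : ℕ) : ∑ m ∈ Finset.range N, ((1:ℝ)/2) ^ (m + 2) ≤ 1 := by
  have h : ∑ m ∈ Finset.range N, ((1:ℝ)/2) ^ (m + 2)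
      = (1/4) * ∑ m ∈ Finset.range N, ((1:ℝ)/2) ^ m := by
    rw [Finset.mul_sum]
    apply Finset.sum_congr rfl
    intro m _
    rw [pow_add]
    ring
  rw [h]
  have h2 : ∑ m ∈ Finset.range N, ((1:ℝ)/2) ^ m ≤ 2 := by
    rw [geom_sum_eq (by norm_num : ((1:ℝ)/2) ≠ 1)]
    have : (0:ℝ) ≤ ((1:ℝ)/2) ^ N := by positivity
    rw [div_le_iff_of_neg (by norm_num : ((1:ℝ)/2) - 1 < 0)]
    linarith
  linarith

lemma gS_split (k : ℕ) (t : ℝ) :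
    gS (Sk k) t = t ^ (2 * 0) + t ^ (2 * 1) + ∑ j ∈ Finset.Icc 1 k, t ^ (2 * f j) := by
  rw [gS, Sk, Finset.sum_union, Finset.sum_pair (by norm_num : (0:ℕ) ≠ 1),
    Finset.sum_image]
  · intro x _ y _ h
    exact f_strictMono.injective h
  · rw [Finset.disjoint_left]
    intro n hn
    have : n ≤ 1 := by
      simp only [Finset.mem_insert, Finset.mem_singleton] at hn
      omega
    exact not_mem_image_f n this _

lemma gS_le {k i : ℕ} (hik : i ≤ k) {t : ℝ} (ht0 : 0 ≤ t) (htb : t ≤ b i) :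
    gS (Sk k) t ≤ (i : ℝ) + 3 := by
  have ht1 : t ≤ 1 := le_trans htb (b_lt_one i).le
  rw [gS_split]
  have hsplit : Finset.Icc 1 k = Finset.Icc 1 i ∪ Finset.Icc (i+1) k := by
    ext x
    simp only [Finset.mem_Icc, Finset.mem_union]
    omega
  have hdisj : Disjoint (Finset.Icc 1 i) (Finset.Icc (i+1) k) := by
    rw [Finset.disjoint_left]
    intro x hx hx'
    simp only [Finset.mem_Icc] at hx hx'
    omega
  rw [hsplit, Finset.sum_union hdisj]
  have h1 : ∑ j ∈ Finset.Icc 1 i, t ^ (2 * f j) ≤ (i : ℝ) := by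
    calc ∑ j ∈ Finset.Icc 1 i, t ^ (2 * f j) ≤ ∑ j ∈ Finset.Icc 1 i, (1:ℝ) :=
          Finset.sum_le_sum fun j _ => pow_le_one₀ ht0 ht1
      _ = (i : ℝ) := by rw [Finset.sum_const, Nat.card_Icc]; simp
  have h2 : ∑ j ∈ Finset.Icc (i+1) k, t ^ (2 * f j) ≤ 1 := by
    have hb : ∀ j ∈ Finset.Icc (i+1) k, t ^ (2 * f j) ≤ ((1:ℝ)/2) ^ (j - i + 1) := by
      intro j hj
      have hj' := Finset.mem_Icc.mp hj
      calc t ^ (2 * f j) ≤ b i ^ (2 * f j) := pow_le_pow_left₀ ht0 htb _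
        _ ≤ ((1:ℝ)/2) ^ (j - i + 1) := b_pow_le i (f j) (j - i + 1) (mul_f_le i j (by omega))
    calc ∑ j ∈ Finset.Icc (i+1) k, t ^ (2 * f j)
        ≤ ∑ j ∈ Finset.Icc (i+1) k, ((1:ℝ)/2) ^ (j - i + 1) := Finset.sum_le_sum hb
      _ = ∑ m ∈ Finset.range (k + 1 - (i+1)), ((1:ℝ)/2) ^ ((i + 1 + m) - i + 1) := by
          rw [← Finset.Ico_add_one_right_eq_Icc, Finset.sum_Ico_eq_sum_range]
      _ = ∑ m ∈ Finset.range (k + 1 - (i+1)), ((1:ℝ)/2) ^ (m + 2) := by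
          apply Finset.sum_congr rfl
          intro m _
          congr 1
          omega
      _ ≤ 1 := geom_tail _
  have h3 : t ^ (2 * 0) = (1:ℝ) := by norm_num
  have h4 : t ^ (2 * 1) ≤ (1:ℝ) := pow_le_one₀ ht0 ht1
  rw [h3]
  linarith

lemma interval_bound {k i : ℕ} (hi1 : 1 ≤ i) (hik : i ≤ k) :
    (1/20) * (Real.sqrt ((i:ℝ)+1) / ((i:ℝ)+3))
      ≤ ∫ t in (a i)..(b i), Real.sqrt (ES (Sk k) t) / gS (Sk k) t := by
  have hab := (a_lt_b i).le
  set C : ℝ := Real.sqrt ((i:ℝ)+1) * (f i : ℝ) / (4 * ((i:ℝ)+3)) with hC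
  have hCint : IntervalIntegrable (fun t => C * t ^ (f i - 1))
      MeasureTheory.volume (a i) (b i) :=
    (continuous_const.mul (continuous_pow _)).intervalIntegrable _ _
  have hphint : IntervalIntegrable (fun t => Real.sqrt (ES (Sk k) t) / gS (Sk k) t)
      MeasureTheory.volume (a i) (b i) :=
    (continuous_phi (Sk k) (zero_mem k)).intervalIntegrable _ _
  have hmono : ∫ t in (a i)..(b i), C * t ^ (f i - 1)
      ≤ ∫ t in (a i)..(b i), Real.sqrt (ES (Sk k) t) / gS (Sk k) t := by
    apply intervalIntegral.integral_mono_on hab hCint hphint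
    intro t ht
    obtain ⟨hta, htb⟩ := ht
    have ht0 : 0 < t := lt_of_lt_of_le (a_pos i) hta
    have hnum := sqrtES_ge hi1 hik hta htb
    have hg := gS_le hik ht0.le htb
    have hgpos : (0:ℝ) < gS (Sk k) t := lt_of_lt_of_le one_pos (gS_pos _ (zero_mem k) t)
    have hdiv : (Real.sqrt ((i:ℝ)+1) * (f i : ℝ) * t ^ (f i - 1) / 4) / ((i:ℝ)+3)
        ≤ Real.sqrt (ES (Sk k) t) / gS (Sk k) t :=
      div_le_div₀ (Real.sqrt_nonneg _) hnum hgpos hg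
    calc C * t ^ (f i - 1)
        = (Real.sqrt ((i:ℝ)+1) * (f i:ℝ) * t ^ (f i - 1) / 4) / ((i:ℝ)+3) := by
          rw [hC]
          have h3 : ((i:ℝ)+3) ≠ 0 := by positivity
          field_simp
      _ ≤ _ := hdiv
  have h1 : f i - 1 + 1 = f i := by have := f_pos i; omega
  have hval : ∫ t in (a i)..(b i), C * t ^ (f i - 1)
      = C * ((b i ^ (f i) - a i ^ (f i)) / (f i : ℝ)) := by
    have h2 : ((f i - 1 : ℕ):ℝ) + 1 = (f i:ℝ) := by exact_mod_cast h1
    rw [intervalIntegral.integral_const_mul, integral_pow, h1, h2]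
  have hba : (1:ℝ)/5 ≤ b i ^ (f i) - a i ^ (f i) := by
    rw [a_pow, b_pow]
    have := b_pow_ge
    linarith
  have hfi : (0:ℝ) < (f i : ℝ) := fR_pos i
  have hs : (0:ℝ) ≤ Real.sqrt ((i:ℝ)+1) := Real.sqrt_nonneg _
  have h3 : (0:ℝ) < (i:ℝ)+3 := by positivity
  have key : (1/20) * (Real.sqrt ((i:ℝ)+1) / ((i:ℝ)+3))
      ≤ C * ((b i ^ (f i) - a i ^ (f i)) / (f i : ℝ)) := by
    have heq : C * ((b i ^ (f i) - a i ^ (f i)) / (f i : ℝ))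
        = (Real.sqrt ((i:ℝ)+1) / ((i:ℝ)+3)) * ((b i ^ (f i) - a i ^ (f i)) / 4) := by
      rw [hC]
      field_simp
    rw [heq]
    calc (1/20) * (Real.sqrt ((i:ℝ)+1) / ((i:ℝ)+3))
        = (Real.sqrt ((i:ℝ)+1) / ((i:ℝ)+3)) * (1/20) := by ring
      _ ≤ (Real.sqrt ((i:ℝ)+1) / ((i:ℝ)+3)) * ((b i ^ (f i) - a i ^ (f i)) / 4) := by
          apply mul_le_mul_of_nonneg_left (by linarith) (by positivity)
  calc (1/20) * (Real.sqrt ((i:ℝ)+1) / ((i:ℝ)+3))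
      ≤ C * ((b i ^ (f i) - a i ^ (f i)) / (f i : ℝ)) := key
    _ = ∫ t in (a i)..(b i), C * t ^ (f i - 1) := hval.symm
    _ ≤ _ := hmono

lemma sum_le_integral (k n : ℕ) :
    ∑ i ∈ Finset.Icc 1 n, (∫ t in (a i)..(b i), Real.sqrt (ES (Sk k) t) / gS (Sk k) t)
      ≤ ∫ t in (0:ℝ)..(b n), Real.sqrt (ES (Sk k) t) / gS (Sk k) t := by
  have hc : Continuous (fun t => Real.sqrt (ES (Sk k) t) / gS (Sk k) t) :=
    continuous_phi _ (zero_mem k)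
  have hint : ∀ u v : ℝ, IntervalIntegrable
      (fun t => Real.sqrt (ES (Sk k) t) / gS (Sk k) t) MeasureTheory.volume u v :=
    fun u v => hc.intervalIntegrable u v
  have hnn := phi_nonneg (Sk k) (zero_mem k)
  induction n with
  | zero =>
    rw [show Finset.Icc 1 0 = (∅ : Finset ℕ) from rfl, Finset.sum_empty]
    exact intervalIntegral.integral_nonneg (b_pos 0).le (fun t _ => hnn t)
  | succ n ih =>
    rw [Finset.sum_Icc_succ_top (by omega : 1 ≤ n + 1)]
    have e1 : (∫ t in (0:ℝ)..(b n), Real.sqrt (ES (Sk k) t) / gS (Sk k) t)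
        + (∫ t in (b n)..(a (n+1)), Real.sqrt (ES (Sk k) t) / gS (Sk k) t)
        = ∫ t in (0:ℝ)..(a (n+1)), Real.sqrt (ES (Sk k) t) / gS (Sk k) t :=
      intervalIntegral.integral_add_adjacent_intervals (hint _ _) (hint _ _)
    have e2 : (∫ t in (0:ℝ)..(a (n+1)), Real.sqrt (ES (Sk k) t) / gS (Sk k) t)
        + (∫ t in (a (n+1))..(b (n+1)), Real.sqrt (ES (Sk k) t) / gS (Sk k) t)
        = ∫ t in (0:ℝ)..(b (n+1)), Real.sqrt (ES (Sk k) t) / gS (Sk k) t :=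
      intervalIntegral.integral_add_adjacent_intervals (hint _ _) (hint _ _)
    have hmid : 0 ≤ ∫ t in (b n)..(a (n+1)), Real.sqrt (ES (Sk k) t) / gS (Sk k) t :=
      intervalIntegral.integral_nonneg (b_le_a_succ n) (fun t _ => hnn t)
    linarith

lemma zS_lower (k : ℕ) (hk : 1 ≤ k) :
    (1/Real.pi) * ((k:ℝ) * (1/(60 * Real.sqrt ((k:ℝ)+1)))) ≤ zS (Sk k) := by
  have hsk : (0:ℝ) < Real.sqrt ((k:ℝ)+1) := Real.sqrt_pos.mpr (by positivity)
  have hc : Continuous (fun t => Real.sqrt (ES (Sk k) t) / gS (Sk k) t) :=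
    continuous_phi _ (zero_mem k)
  have hint : ∀ u v : ℝ, IntervalIntegrable
      (fun t => Real.sqrt (ES (Sk k) t) / gS (Sk k) t) MeasureTheory.volume u v :=
    fun u v => hc.intervalIntegrable u v
  have hnn := phi_nonneg (Sk k) (zero_mem k)
  -- each term of the sum is at least 1/(60 √(k+1))
  have hterm : ∀ i ∈ Finset.Icc 1 k, 1/(60 * Real.sqrt ((k:ℝ)+1))
      ≤ ∫ t in (a i)..(b i), Real.sqrt (ES (Sk k) t) / gS (Sk k) t := by
    intro i hi
    obtain ⟨hi1, hik⟩ := Finset.mem_Icc.mp hi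
    have h2 : (1/20) * (Real.sqrt ((i:ℝ)+1) / ((i:ℝ)+3))
        ≤ ∫ t in (a i)..(b i), Real.sqrt (ES (Sk k) t) / gS (Sk k) t :=
      interval_bound hi1 hik
    have hs1 : (1:ℝ) ≤ Real.sqrt ((i:ℝ)+1) := by
      have h := Real.sqrt_le_sqrt (by linarith [(Nat.cast_nonneg i : (0:ℝ) ≤ (i:ℝ))] :
        (1:ℝ) ≤ (i:ℝ)+1)
      rwa [Real.sqrt_one] at h
    have hssk : Real.sqrt ((i:ℝ)+1) ≤ Real.sqrt ((k:ℝ)+1) := by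
      apply Real.sqrt_le_sqrt
      have : (i:ℝ) ≤ (k:ℝ) := by exact_mod_cast hik
      linarith
    have hsq : Real.sqrt ((i:ℝ)+1) * Real.sqrt ((i:ℝ)+1) = (i:ℝ)+1 :=
      Real.mul_self_sqrt (by positivity)
    have hstep : 1/(60 * Real.sqrt ((k:ℝ)+1)) ≤ (1/20) * (Real.sqrt ((i:ℝ)+1) / ((i:ℝ)+3)) := by
      have hprod : Real.sqrt ((i:ℝ)+1) * Real.sqrt ((i:ℝ)+1)
          ≤ Real.sqrt ((i:ℝ)+1) * Real.sqrt ((k:ℝ)+1) :=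
        mul_le_mul_of_nonneg_left hssk (by linarith)
      have hi0 : (0:ℝ) ≤ (i:ℝ) := Nat.cast_nonneg i
      have h3 : (0:ℝ) < (i:ℝ)+3 := by positivity
      have heq : (1/20) * (Real.sqrt ((i:ℝ)+1) / ((i:ℝ)+3))
          = (Real.sqrt ((i:ℝ)+1)) / (20 * ((i:ℝ)+3)) := by
        field_simp
      rw [heq, div_le_div_iff₀ (by positivity) (by positivity), one_mul]
      nlinarith
    linarith
  have hcard : (Finset.Icc 1 k).card = k := by rw [Nat.card_Icc]; omega
  have hsum : (k:ℝ) * (1/(60 * Real.sqrt ((k:ℝ)+1)))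
      ≤ ∑ i ∈ Finset.Icc 1 k, ∫ t in (a i)..(b i), Real.sqrt (ES (Sk k) t) / gS (Sk k) t := by
    have := Finset.card_nsmul_le_sum (Finset.Icc 1 k)
      (fun i => ∫ t in (a i)..(b i), Real.sqrt (ES (Sk k) t) / gS (Sk k) t)
      (1/(60 * Real.sqrt ((k:ℝ)+1))) hterm
    rwa [hcard, nsmul_eq_mul] at this
  have hsplit := sum_le_integral k k
  have e1 : (∫ t in (0:ℝ)..(b k), Real.sqrt (ES (Sk k) t) / gS (Sk k) t)
      + (∫ t in (b k)..(1:ℝ), Real.sqrt (ES (Sk k) t) / gS (Sk k) t)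
      = ∫ t in (0:ℝ)..(1:ℝ), Real.sqrt (ES (Sk k) t) / gS (Sk k) t :=
    intervalIntegral.integral_add_adjacent_intervals (hint _ _) (hint _ _)
  have hmid : 0 ≤ ∫ t in (b k)..(1:ℝ), Real.sqrt (ES (Sk k) t) / gS (Sk k) t :=
    intervalIntegral.integral_nonneg (b_lt_one k).le (fun t _ => hnn t)
  have htot : (k:ℝ) * (1/(60 * Real.sqrt ((k:ℝ)+1)))
      ≤ ∫ t in (0:ℝ)..(1:ℝ), Real.sqrt (ES (Sk k) t) / gS (Sk k) t := by linarith
  rw [zS]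
  apply mul_le_mul_of_nonneg_left htot
  have := Real.pi_pos
  positivity

end St1

theorem stmt1 :
    ∃ c : ℝ, c > 0 ∧ ∃ K : ℕ, ∀ k : ℕ, K ≤ k →
      zS ({0, 1} ∪ (Finset.Icc 1 k).image (fun i => 2 ^ (2 ^ i))) ≥ c * Real.sqrt k := by
  refine ⟨1/400, by norm_num, 1, ?_⟩
  intro k hk
  have hset : ({0, 1} ∪ (Finset.Icc 1 k).image (fun i => 2 ^ (2 ^ i))) = St1.Sk k := rfl
  rw [hset, ge_iff_le]
  have hmain := St1.zS_lower k hk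
  have hk1 : (1:ℝ) ≤ (k:ℝ) := by exact_mod_cast hk
  set s : ℝ := Real.sqrt (k:ℝ) with hs
  set sk : ℝ := Real.sqrt ((k:ℝ)+1) with hsk
  have hs0 : 0 ≤ s := Real.sqrt_nonneg _
  have hsk0 : 0 < sk := Real.sqrt_pos.mpr (by linarith)
  have hπ := Real.pi_pos
  have hπ4 := Real.pi_le_four
  have hmul : s * sk ≤ (3/2) * (k:ℝ) := by
    have h1 : s * sk = Real.sqrt ((k:ℝ) * ((k:ℝ)+1)) :=
      (Real.sqrt_mul (by linarith) _).symm
    have h2 : Real.sqrt ((k:ℝ) * ((k:ℝ)+1)) ≤ Real.sqrt (((3/2) * (k:ℝ))^2) :=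
      Real.sqrt_le_sqrt (by nlinarith)
    rwa [Real.sqrt_sq (by linarith), ← h1] at h2
  have hfin : (1/400 : ℝ) * s ≤ (1/Real.pi) * ((k:ℝ) * (1/(60 * sk))) := by
    have heq : (1/Real.pi) * ((k:ℝ) * (1/(60 * sk))) = (k:ℝ) / (Real.pi * 60 * sk) := by
      field_simp
    have heq2 : (1/400 : ℝ) * s = s / 400 := by ring
    rw [heq, heq2, div_le_div_iff₀ (by norm_num) (by positivity)]
    have hπsk : Real.pi * 60 * sk > 0 := by positivity
    have h1 : Real.pi * (s * sk) ≤ 4 * ((3/2) * (k:ℝ)) :=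
      mul_le_mul hπ4 hmul (by positivity) (by norm_num)
    nlinarith
  calc (1/400 : ℝ) * s ≤ (1/Real.pi) * ((k:ℝ) * (1/(60 * sk))) := hfin
    _ ≤ zS (St1.Sk k) := hmain
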